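/- Let n, K, L be real numbers with K > 0, L ≥ 0, n − K − L > 0 and n − L > 0. Let S be positive definite symmetric 2×2, T positive semidefinite symmetric 2×2, with T₂₂ − m_min·S₂₂ ≠ 0. Set â = a(β̂_LIML), λ̂ = m_max − K/n, and Ω̂ = (1/(n − L))·[ (n − K − L)S + n( T − (λ̂/(âᵀS⁻¹â))·ââᵀ ) ]. If Ω̂ is invertible, then âᵀ Ω̂⁻¹ â = âᵀ S⁻¹ â. -/

import Mathlib

open Matrix

/-- `a(β) = (β, 1)ᵀ`. -/
def aVec (β : ℝ) : Fin 2 → ℝ := ![β, 1]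

/-- Scalar core: the eigen-identity for the LIML vector. -/
lemma scalar_core (s00 s01 s11 t00 t01 t11 mmin mmax : ℝ)
    (hs00 : 0 < s00) (hd : 0 < s00*s11 - s01*s01)
    (hE1 : (t00 - mmin*s00)*(t11 - mmin*s11) - (t01 - mmin*s01)^2 = 0)
    (hE2 : (t00 - mmax*s00)*(t11 - mmax*s11) - (t01 - mmax*s01)^2 = 0)
    (htr : s11*t00 + s00*t11 - 2*s01*t01 = (mmin+mmax)*(s00*s11 - s01*s01))
    (hdenom : t11 - mmin*s11 ≠ 0) :
    (t00*(s11*(t01 - mmin*s01) - s01*(t11 - mmin*s11))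
      + t01*(s00*(t11 - mmin*s11) - s01*(t01 - mmin*s01))
      = mmax*(s00*s11 - s01*s01)*(t01 - mmin*s01)) ∧
    (t01*(s11*(t01 - mmin*s01) - s01*(t11 - mmin*s11))
      + t11*(s00*(t11 - mmin*s11) - s01*(t01 - mmin*s01))
      = mmax*(s00*s11 - s01*s01)*(t11 - mmin*s11)) := by
  set u01 := t01 - mmin*s01 with hu01
  set u11 := t11 - mmin*s11 with hu11
  by_cases hmm : mmin = mmax
  · -- degenerate case: contradiction
    exfalso
    subst hmm
    have hQ : s00*u11^2 - 2*s01*u01*u11 + s11*u01^2 = 0 := by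
      have h3 : s11*(t00 - mmin*s00) - 2*s01*u01 + s00*u11 = 0 := by
        rw [hu01, hu11]; linear_combination htr
      have h4 : (t00 - mmin*s00)*u11 = u01^2 := by linear_combination hE1
      have h5 : u11*(s11*(t00 - mmin*s00) - 2*s01*u01 + s00*u11) = 0 := by
        rw [h3]; ring
      linear_combination h5 - s11 * h4
    have h1 : (s00*u11 - s01*u01)^2 + (s00*s11 - s01*s01)*u01^2 = 0 := by
      linear_combination s00 * hQ
    have h2 : u01 = 0 := by
      have h6 : (s00*s11 - s01*s01)*u01^2 ≤ 0 := by nlinarith [sq_nonneg (s00*u11 - s01*u01)]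
      have h7 : u01^2 ≤ 0 := by
        by_contra h
        push_neg at h
        nlinarith
      have := sq_nonneg u01
      have : u01^2 = 0 := le_antisymm h7 this
      exact pow_eq_zero_iff two_ne_zero |>.mp this
    have h8 : s00*u11 = 0 := by
      have : (s00*u11 - s01*u01)^2 = 0 := by nlinarith [sq_nonneg (s00*u11 - s01*u01)]
      have h9 : s00*u11 - s01*u01 = 0 := by
        exact pow_eq_zero_iff two_ne_zero |>.mp this
      rw [h2] at h9; linarith
    exact hdenom (by
      have := mul_eq_zero.mp h8
      rcases this with h | h
      · exact absurd h hs00.ne'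
      · exact h)
  · -- nondegenerate case
    -- construct eigenvector (w0, w1) for mmax
    obtain ⟨w0, w1, hw, hF0, hF1⟩ :
        ∃ w0 w1 : ℝ, ¬(w0 = 0 ∧ w1 = 0) ∧
          t00*w0 + t01*w1 - mmax*(s00*w0 + s01*w1) = 0 ∧
          t01*w0 + t11*w1 - mmax*(s01*w0 + s11*w1) = 0 := by
      by_cases hv : t11 - mmax*s11 = 0 ∧ t01 - mmax*s01 = 0
      · exact ⟨0, 1, by simp, by linarith [hv.1, hv.2], by linarith [hv.1, hv.2]⟩
      · refine ⟨t11 - mmax*s11, -(t01 - mmax*s01), ?_, by linear_combination hE2, by ring⟩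
        intro ⟨h1, h2⟩
        exact hv ⟨h1, by linarith [neg_eq_zero.mp h2]⟩
    have hW : u11*(s00*w0 + s01*w1) - u01*(s01*w0 + s11*w1) = 0 := by
      have h := sub_ne_zero.mpr (Ne.symm hmm)
      have hc : (mmax - mmin) * (u11*(s00*w0 + s01*w1) - u01*(s01*w0 + s11*w1)) = 0 := by
        rw [hu01, hu11]; linear_combination (-(t11 - mmin*s11)) * hF0 + (t01 - mmin*s01) * hF1 + w0 * hE1
      rcases mul_eq_zero.mp hc with h' | h'
      · exact absurd h' h
      · exact h'
    set c := s01*w0 + s11*w1 with hcdef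
    have hc : c ≠ 0 := by
      intro hc0
      have hSw0 : s00*w0 + s01*w1 = 0 := by
        rcases mul_eq_zero.mp (by linear_combination hW + u01 * hc0 : u11*(s00*w0 + s01*w1) = 0) with h | h
        · exact absurd h hdenom
        · exact h
      have hw0 : w0 = 0 := by
        have : (s00*s11 - s01*s01)*w0 = 0 := by
          rw [hcdef] at hc0; linear_combination s11 * hSw0 - s01 * hc0
        rcases mul_eq_zero.mp this with h | h
        · exact absurd h hd.ne'
        · exact h
      have hw1 : w1 = 0 := by
        have : (s00*s11 - s01*s01)*w1 = 0 := by
          rw [hcdef] at hc0; linear_combination (-s01) * hSw0 + s00 * hc0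
        rcases mul_eq_zero.mp this with h | h
        · exact absurd h hd.ne'
        · exact h
      exact hw ⟨hw0, hw1⟩
    constructor
    · have hcA : c * (t00*(s11*u01 - s01*u11) + t01*(s00*u11 - s01*u01)
          - mmax*(s00*s11 - s01*s01)*u01) = 0 := by
        linear_combination (t00*s11 - t01*s01 - mmax*(s00*s11 - s01*s01)) * (-hW)
          + u11*(s00*s11 - s01*s01) * hF0
      rcases mul_eq_zero.mp hcA with h | h
      · exact absurd h hc
      · linarith [h]
    · have hcB : c * (t01*(s11*u01 - s01*u11) + t11*(s00*u11 - s01*u01)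
          - mmax*(s00*s11 - s01*s01)*u11) = 0 := by
        linear_combination (t01*s11 - t11*s01) * (-hW) + u11*(s00*s11 - s01*s01) * hF1
      rcases mul_eq_zero.mp hcB with h | h
      · exact absurd h hc
      · linarith [h]

lemma spec_iff_det (S T : Matrix (Fin 2) (Fin 2) ℝ) (hS : IsUnit S.det) (m : ℝ) :
    m ∈ spectrum ℝ (S⁻¹ * T) ↔ (T - m • S).det = 0 := by
  rw [spectrum.mem_iff]
  have h1 : algebraMap ℝ (Matrix (Fin 2) (Fin 2) ℝ) m - S⁻¹ * T = S⁻¹ * (m • S - T) := by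
    rw [Matrix.mul_sub, Matrix.mul_smul, Matrix.nonsing_inv_mul _ hS, Algebra.algebraMap_eq_smul_one]
  have hinv : S⁻¹.det ≠ 0 := by
    rw [Matrix.det_nonsing_inv, Ring.inverse_eq_inv]
    exact inv_ne_zero (by simpa [isUnit_iff_ne_zero] using hS)
  have h3 : (T - m • S).det = (m • S - T).det := by
    rw [show T - m • S = -(m • S - T) by abel, Matrix.det_neg]
    simp
  rw [h1, Matrix.isUnit_iff_isUnit_det, Matrix.det_mul, isUnit_iff_ne_zero, h3]
  constructor
  · intro h
    by_contra h2
    exact h (mul_ne_zero hinv h2)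
  · intro h h2
    exact h2 (by rw [h, mul_zero])

lemma key_eigen (S T : Matrix (Fin 2) (Fin 2) ℝ) (hS : S.PosDef)
    (mmin mmax : ℝ)
    (hE1 : (T - mmin • S).det = 0) (hE2 : (T - mmax • S).det = 0)
    (htr : S 1 1 * T 0 0 + S 0 0 * T 1 1 - 2 * (S 0 1 * T 0 1) =
      (mmin + mmax) * (S 0 0 * S 1 1 - S 0 1 * S 0 1))
    (hTsym : T 1 0 = T 0 1)
    (hdenom : T 1 1 - mmin * S 1 1 ≠ 0) :
    T.mulVec (S⁻¹.mulVec (aVec ((T 0 1 - mmin * S 0 1) / (T 1 1 - mmin * S 1 1)))) =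
      mmax • aVec ((T 0 1 - mmin * S 0 1) / (T 1 1 - mmin * S 1 1)) := by
  have hSsym : S 1 0 = S 0 1 := by have := hS.1.apply 0 1; simpa using this
  have hdet : S.det = S 0 0 * S 1 1 - S 0 1 * S 0 1 := by
    rw [Matrix.det_fin_two, hSsym]
  have hdpos : 0 < S 0 0 * S 1 1 - S 0 1 * S 0 1 := hdet ▸ hS.det_pos
  have hs00 : 0 < S 0 0 := by
    have h := hS.dotProduct_mulVec_pos (x := ![1, 0]) (by intro h; simpa using congrFun h 0)
    simpa [dotProduct, Matrix.mulVec, Fin.sum_univ_two] using h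
  have hE1s : (T 0 0 - mmin*S 0 0)*(T 1 1 - mmin*S 1 1) - (T 0 1 - mmin*S 0 1)^2 = 0 := by
    rw [Matrix.det_fin_two] at hE1
    simp only [Matrix.sub_apply, Matrix.smul_apply, smul_eq_mul, hSsym, hTsym] at hE1
    linear_combination hE1
  have hE2s : (T 0 0 - mmax*S 0 0)*(T 1 1 - mmax*S 1 1) - (T 0 1 - mmax*S 0 1)^2 = 0 := by
    rw [Matrix.det_fin_two] at hE2
    simp only [Matrix.sub_apply, Matrix.smul_apply, smul_eq_mul, hSsym, hTsym] at hE2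
    linear_combination hE2
  obtain ⟨hA, hB⟩ := scalar_core (S 0 0) (S 0 1) (S 1 1) (T 0 0) (T 0 1) (T 1 1) mmin mmax
    hs00 hdpos hE1s hE2s (by linear_combination htr) hdenom
  have hSinv : S⁻¹ = (S.det)⁻¹ • !![S 1 1, -(S 0 1); -(S 1 0), S 0 0] := by
    rw [Matrix.inv_def, Matrix.adjugate_fin_two, Ring.inverse_eq_inv]
  have hd0 : S.det ≠ 0 := hS.det_pos.ne'
  set u01 := T 0 1 - mmin * S 0 1 with hu01
  set u11 := T 1 1 - mmin * S 1 1 with hu11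
  have step : T.mulVec (S⁻¹.mulVec ![u01, u11]) = mmax • ![u01, u11] := by
    funext i
    fin_cases i
    · simp only [Fin.mk_zero, Fin.mk_one, hSinv, Matrix.mulVec, dotProduct,
        Fin.sum_univ_two, Matrix.smul_apply, Matrix.cons_val_zero, Matrix.cons_val_one,
        Matrix.head_cons, Matrix.of_apply, smul_eq_mul, Pi.smul_apply, Matrix.cons_val',
        Matrix.empty_val', Matrix.cons_val_fin_one, Matrix.vecHead, Matrix.vecTail,
        hSsym, hTsym]
      rw [hdet]
      field_simp [hdpos.ne', show S 1 1 * S 0 0 - S 0 1 ^ 2 ≠ 0 by nlinarith, show S 0 0 * S 1 1 - S 0 1 ^ 2 ≠ 0 by nlinarith]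
      linear_combination hA
    · simp only [Fin.mk_one, Fin.mk_zero, hSinv, Matrix.mulVec, dotProduct,
        Fin.sum_univ_two, Matrix.smul_apply, Matrix.cons_val_zero, Matrix.cons_val_one,
        Matrix.head_cons, Matrix.of_apply, smul_eq_mul, Pi.smul_apply, Matrix.cons_val',
        Matrix.empty_val', Matrix.cons_val_fin_one, Matrix.vecHead, Matrix.vecTail,
        hSsym, hTsym]
      rw [hdet]
      field_simp [hdpos.ne', show S 1 1 * S 0 0 - S 0 1 ^ 2 ≠ 0 by nlinarith, show S 0 0 * S 1 1 - S 0 1 ^ 2 ≠ 0 by nlinarith]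
      linear_combination hB
  have haa : aVec (u01 / u11) = u11⁻¹ • ![u01, u11] := by
    funext i
    fin_cases i
    · simp [aVec, div_eq_inv_mul, mul_comm]
    · simp [aVec, inv_mul_cancel₀ hdenom]
  rw [haa, Matrix.mulVec_smul, Matrix.mulVec_smul, step, smul_comm]

/-- `âᵀ Ω̂⁻¹ â = âᵀ S⁻¹ â` for the RE covariance estimate `Ω̂`. -/
theorem stmt_8 (n K L : ℝ) (hK : 0 < K) (hL : 0 ≤ L) (hν : 0 < n - K - L)
    (hnL : 0 < n - L)
    (S T : Matrix (Fin 2) (Fin 2) ℝ) (hS : S.PosDef) (hT : T.PosSemidef)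
    (mmin mmax : ℝ)
    (hmin : mmin ∈ spectrum ℝ (S⁻¹ * T)) (hmax : mmax ∈ spectrum ℝ (S⁻¹ * T))
    (hbounds : ∀ μ ∈ spectrum ℝ (S⁻¹ * T), mmin ≤ μ ∧ μ ≤ mmax)
    (hdenom : T 1 1 - mmin * S 1 1 ≠ 0) :
    letI βhat : ℝ := (T 0 1 - mmin * S 0 1) / (T 1 1 - mmin * S 1 1)
    letI lamhat : ℝ := mmax - K / n
    letI ahat : Fin 2 → ℝ := aVec βhat
    letI Ωhat : Matrix (Fin 2) (Fin 2) ℝ :=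
      (1 / (n - L)) • ((n - K - L) • S +
        n • (T - (lamhat / (ahat ⬝ᵥ S⁻¹.mulVec ahat)) • vecMulVec ahat ahat))
    IsUnit Ωhat.det →
      ahat ⬝ᵥ Ωhat⁻¹.mulVec ahat = ahat ⬝ᵥ S⁻¹.mulVec ahat := by
  intro hdetΩ
  have hn : 0 < n := by linarith
  have hSsym : S 1 0 = S 0 1 := by have := hS.1.apply 0 1; simpa using this
  have hTsym : T 1 0 = T 0 1 := by have := hT.1.apply 0 1; simpa using this
  have hdet : S.det = S 0 0 * S 1 1 - S 0 1 * S 0 1 := by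
    rw [Matrix.det_fin_two, hSsym]
  have hdpos : 0 < S 0 0 * S 1 1 - S 0 1 * S 0 1 := hdet ▸ hS.det_pos
  have hd0 : S.det ≠ 0 := hS.det_pos.ne'
  have hUnit : IsUnit S.det := isUnit_iff_ne_zero.mpr hd0
  -- trace relation
  have hother : ∀ m, m ∈ spectrum ℝ (S⁻¹ * T) →
      ((S 1 1 * T 0 0 + S 0 0 * T 1 1 - 2 * (S 0 1 * T 0 1)) / S.det - m)
        ∈ spectrum ℝ (S⁻¹ * T) := by
    intro m hm
    rw [spec_iff_det S T hUnit] at hm ⊢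
    rw [Matrix.det_fin_two] at hm ⊢
    simp only [Matrix.sub_apply, Matrix.smul_apply, smul_eq_mul, hSsym, hTsym] at hm ⊢
    rw [hdet]
    field_simp [hdpos.ne', show S 1 1 * S 0 0 - S 0 1 ^ 2 ≠ 0 by nlinarith, show S 0 0 * S 1 1 - S 0 1 ^ 2 ≠ 0 by nlinarith]
    linear_combination (S 0 0 * S 1 1 - S 0 1 * S 0 1)^2 * hm
  have h1 := (hbounds _ (hother mmin hmin)).2
  have h2 := (hbounds _ (hother mmax hmax)).1
  have htr0 : (S 1 1 * T 0 0 + S 0 0 * T 1 1 - 2 * (S 0 1 * T 0 1)) / S.det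
      = mmin + mmax := by linarith
  rw [div_eq_iff hd0] at htr0
  have htr : S 1 1 * T 0 0 + S 0 0 * T 1 1 - 2 * (S 0 1 * T 0 1) =
      (mmin + mmax) * (S 0 0 * S 1 1 - S 0 1 * S 0 1) := by rw [htr0, hdet]
  have hE1 : (T - mmin • S).det = 0 := (spec_iff_det S T hUnit mmin).mp hmin
  have hE2 : (T - mmax • S).det = 0 := (spec_iff_det S T hUnit mmax).mp hmax
  have hTu := key_eigen S T hS mmin mmax hE1 hE2 htr hTsym hdenom
  set βhat : ℝ := (T 0 1 - mmin * S 0 1) / (T 1 1 - mmin * S 1 1) with hβ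
  set ahat : Fin 2 → ℝ := aVec βhat with hahat
  set u : Fin 2 → ℝ := S⁻¹.mulVec ahat with hu
  have haneq : ahat ≠ 0 := by
    intro h
    have := congrFun h 1
    simp [hahat, aVec] at this
  have hq : 0 < ahat ⬝ᵥ u := by
    have := hS.inv.dotProduct_mulVec_pos haneq
    simpa [hu] using this
  set q : ℝ := ahat ⬝ᵥ u with hqdef
  have hSu : S.mulVec u = ahat := by
    rw [hu, Matrix.mulVec_mulVec, Matrix.mul_nonsing_inv _ hUnit, Matrix.one_mulVec]
  have hVu : (vecMulVec ahat ahat).mulVec u = q • ahat := by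
    funext i
    simp [vecMulVec, Matrix.mulVec, dotProduct, Fin.sum_univ_two, hqdef]
    ring
  have hΩu : ((1 / (n - L)) • ((n - K - L) • S +
      n • (T - ((mmax - K / n) / q) • vecMulVec ahat ahat))).mulVec u = ahat := by
    rw [Matrix.smul_mulVec, Matrix.add_mulVec, Matrix.smul_mulVec,
      Matrix.smul_mulVec, Matrix.sub_mulVec, Matrix.smul_mulVec,
      hSu, hTu, hVu]
    funext i
    simp only [Pi.smul_apply, Pi.add_apply, Pi.sub_apply, smul_eq_mul]
    field_simp
    ring
  have hinv : ((1 / (n - L)) • ((n - K - L) • S +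
      n • (T - ((mmax - K / n) / q) • vecMulVec ahat ahat)))⁻¹.mulVec ahat = u := by
    have hcongr := congrArg (fun v => ((1 / (n - L)) • ((n - K - L) • S +
      n • (T - ((mmax - K / n) / q) • vecMulVec ahat ahat)))⁻¹.mulVec v) hΩu
    simp only [Matrix.mulVec_mulVec] at hcongr
    rw [Matrix.nonsing_inv_mul _ hdetΩ, Matrix.one_mulVec] at hcongr
    exact hcongr.symm ▸ rfl
  rw [hinv]
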